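/- Let a_n and b_n (n = 0, 1, 2, ...) be real numbers with b_n > 0 for all n, and suppose the power series A(x) = Σ a_n xⁿ and B(x) = Σ b_n xⁿ converge for |x| < R. If the sequence a_n/b_n is strictly increasing, then the function x ↦ A(x)/B(x) is strictly increasing on (0, R). -/

import Mathlib

open Filter

/-- Absolute summability strictly inside the radius. -/
lemma abs_summable_aux (a : ℕ → ℝ) (R y : ℝ) (hy : 0 < y) (hyR : y < R)
    (hA : ∀ x : ℝ, |x| < R → Summable (fun n => a n * x^n)) :
    Summable (fun n => |a n| * y^n) := by
  obtain ⟨z, hyz, hzR⟩ : ∃ z, y < z ∧ z < R := ⟨(y + R) / 2, by linarith, by linarith⟩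
  have hz0 : 0 < z := hy.trans hyz
  have hs := hA z (by rw [abs_of_pos hz0]; exact hzR)
  have h0 : Tendsto (fun n => |a n * z^n|) atTop (nhds 0) := by
    simpa using hs.tendsto_atTop_zero.abs
  obtain ⟨C, hC⟩ := h0.bddAbove_range
  have key : ∀ n, |a n| * y^n ≤ C * (y/z)^n := by
    intro n
    have h1 : |a n * z^n| ≤ C := hC ⟨n, rfl⟩
    have h2 : |a n * z^n| * (y/z)^n ≤ C * (y/z)^n :=
      mul_le_mul_of_nonneg_right h1 (by positivity)
    calc |a n| * y^n = |a n * z^n| * (y/z)^n := by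
          have hzn : z ^ n ≠ 0 := (pow_pos hz0 n).ne'
          rw [abs_mul, abs_pow, abs_of_pos hz0, div_pow]
          field_simp
      _ ≤ C * (y/z)^n := h2
  refine Summable.of_nonneg_of_le (fun n => by positivity) key ?_
  exact (summable_geometric_of_lt_one (by positivity)
    (by rw [div_lt_one hz0]; exact hyz)).mul_left C

theorem monotone_ratio_power_series (a b : ℕ → ℝ) (R : ℝ) (hR : 0 < R)
    (hb : ∀ n, 0 < b n)
    (hA : ∀ x : ℝ, |x| < R → Summable (fun n => a n * x^n))
    (hB : ∀ x : ℝ, |x| < R → Summable (fun n => b n * x^n))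
    (hmono : StrictMono (fun n => a n / b n)) :
    StrictMonoOn (fun x => (∑' n : ℕ, a n * x^n) / (∑' n : ℕ, b n * x^n))
      (Set.Ioo 0 R) := by
  intro x hx y hy hxy
  obtain ⟨hx0, hxR⟩ := hx
  obtain ⟨hy0, hyR⟩ := hy
  have hax : Summable fun n => ‖a n * x^n‖ := by
    have := abs_summable_aux a R x hx0 hxR hA
    simpa [Real.norm_eq_abs, abs_mul, abs_pow, abs_of_pos hx0] using this
  have hay : Summable fun n => ‖a n * y^n‖ := by
    have := abs_summable_aux a R y hy0 hyR hA
    simpa [Real.norm_eq_abs, abs_mul, abs_pow, abs_of_pos hy0] using this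
  have hbx : Summable fun n => ‖b n * x^n‖ := by
    have := abs_summable_aux b R x hx0 hxR hB
    simpa [Real.norm_eq_abs, abs_mul, abs_pow, abs_of_pos hx0] using this
  have hby : Summable fun n => ‖b n * y^n‖ := by
    have := abs_summable_aux b R y hy0 hyR hB
    simpa [Real.norm_eq_abs, abs_mul, abs_pow, abs_of_pos hy0] using this
  have hBx : 0 < ∑' n : ℕ, b n * x^n :=
    Summable.tsum_pos (hB x (by rw [abs_of_pos hx0]; exact hxR))
      (fun n => (mul_pos (hb n) (pow_pos hx0 n)).le) 0 (by simpa using hb 0)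
  have hBy : 0 < ∑' n : ℕ, b n * y^n :=
    Summable.tsum_pos (hB y (by rw [abs_of_pos hy0]; exact hyR))
      (fun n => (mul_pos (hb n) (pow_pos hy0 n)).le) 0 (by simpa using hb 0)
  have cross : ∀ m n : ℕ, m < n → x^n * y^m < y^n * x^m := by
    intro m n h
    obtain ⟨k, rfl⟩ := Nat.exists_eq_add_of_lt h
    have hp : x^(k+1) < y^(k+1) := pow_lt_pow_left₀ hxy hx0.le (Nat.succ_ne_zero k)
    have hP : 0 < x^m * y^m := mul_pos (pow_pos hx0 m) (pow_pos (hx0.trans hxy) m)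
    have hlt := mul_lt_mul_of_pos_left hp hP
    have e1 : x^(m+k+1) = x^m * x^(k+1) := by ring
    have e2 : y^(m+k+1) = y^m * y^(k+1) := by ring
    rw [e1, e2]
    nlinarith [hlt]
  have hF1 : Summable (fun p : ℕ × ℕ => (a p.1 * y^p.1) * (b p.2 * x^p.2)) :=
    summable_mul_of_summable_norm (f := fun n => a n * y^n) (g := fun n => b n * x^n) hay hbx
  have hF2 : Summable (fun p : ℕ × ℕ => (a p.1 * x^p.1) * (b p.2 * y^p.2)) :=
    summable_mul_of_summable_norm (f := fun n => a n * x^n) (g := fun n => b n * y^n) hax hby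
  have eq1 : (∑' n : ℕ, a n * y^n) * (∑' n : ℕ, b n * x^n)
      = ∑' p : ℕ × ℕ, (a p.1 * y^p.1) * (b p.2 * x^p.2) :=
    tsum_mul_tsum_of_summable_norm (f := fun n => a n * y^n) (g := fun n => b n * x^n) hay hbx
  have eq2 : (∑' n : ℕ, a n * x^n) * (∑' n : ℕ, b n * y^n)
      = ∑' p : ℕ × ℕ, (a p.1 * x^p.1) * (b p.2 * y^p.2) :=
    tsum_mul_tsum_of_summable_norm (f := fun n => a n * x^n) (g := fun n => b n * y^n) hax hby
  have hf : Summable (fun p : ℕ × ℕ =>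
      (a p.1 * y^p.1) * (b p.2 * x^p.2) - (a p.1 * x^p.1) * (b p.2 * y^p.2)) :=
    hF1.sub hF2
  have htf : (∑' p : ℕ × ℕ,
        ((a p.1 * y^p.1) * (b p.2 * x^p.2) - (a p.1 * x^p.1) * (b p.2 * y^p.2)))
      = (∑' n : ℕ, a n * y^n) * (∑' n : ℕ, b n * x^n)
        - (∑' n : ℕ, a n * x^n) * (∑' n : ℕ, b n * y^n) := by
    rw [eq1, eq2]; exact Summable.tsum_sub hF1 hF2
  have hswap : Summable (fun p : ℕ × ℕ =>
      (a p.2 * y^p.2) * (b p.1 * x^p.1) - (a p.2 * x^p.2) * (b p.1 * y^p.1)) :=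
    hf.prod_symm
  have hswap_tsum : (∑' p : ℕ × ℕ,
        ((a p.2 * y^p.2) * (b p.1 * x^p.1) - (a p.2 * x^p.2) * (b p.1 * y^p.1)))
      = ∑' p : ℕ × ℕ,
        ((a p.1 * y^p.1) * (b p.2 * x^p.2) - (a p.1 * x^p.1) * (b p.2 * y^p.2)) :=
    (Equiv.prodComm ℕ ℕ).tsum_eq (fun p : ℕ × ℕ =>
      (a p.1 * y^p.1) * (b p.2 * x^p.2) - (a p.1 * x^p.1) * (b p.2 * y^p.2))
  have hg : Summable (fun p : ℕ × ℕ =>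
      ((a p.1 * y^p.1) * (b p.2 * x^p.2) - (a p.1 * x^p.1) * (b p.2 * y^p.2))
        + ((a p.2 * y^p.2) * (b p.1 * x^p.1) - (a p.2 * x^p.2) * (b p.1 * y^p.1))) :=
    hf.add hswap
  have htg : (∑' p : ℕ × ℕ,
        (((a p.1 * y^p.1) * (b p.2 * x^p.2) - (a p.1 * x^p.1) * (b p.2 * y^p.2))
          + ((a p.2 * y^p.2) * (b p.1 * x^p.1) - (a p.2 * x^p.2) * (b p.1 * y^p.1))))
      = (∑' p : ℕ × ℕ,
          ((a p.1 * y^p.1) * (b p.2 * x^p.2) - (a p.1 * x^p.1) * (b p.2 * y^p.2)))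
        + ∑' p : ℕ × ℕ,
          ((a p.1 * y^p.1) * (b p.2 * x^p.2) - (a p.1 * x^p.1) * (b p.2 * y^p.2)) := by
    rw [Summable.tsum_add hf hswap, hswap_tsum]
  have hgnonneg : ∀ p : ℕ × ℕ, 0 ≤
      ((a p.1 * y^p.1) * (b p.2 * x^p.2) - (a p.1 * x^p.1) * (b p.2 * y^p.2))
        + ((a p.2 * y^p.2) * (b p.1 * x^p.1) - (a p.2 * x^p.2) * (b p.1 * y^p.1)) := by
    rintro ⟨n, m⟩
    dsimp only
    rcases lt_trichotomy n m with h | rfl | h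
    · have h1 : a n * b m < a m * b n := (div_lt_div_iff₀ (hb n) (hb m)).1 (hmono h)
      have h2 : y^n * x^m < x^n * y^m := by nlinarith [cross n m h]
      nlinarith [mul_pos (sub_pos.2 h1) (sub_pos.2 h2)]
    · nlinarith [sq_nonneg (a n)]
    · have h1 : a m * b n < a n * b m := (div_lt_div_iff₀ (hb m) (hb n)).1 (hmono h)
      have h2 : x^n * y^m < y^n * x^m := cross m n h
      nlinarith [mul_pos (sub_pos.2 h1) (sub_pos.2 h2)]
  have hg10 : 0 <
      ((a 1 * y^1) * (b 0 * x^0) - (a 1 * x^1) * (b 0 * y^0))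
        + ((a 0 * y^0) * (b 1 * x^1) - (a 0 * x^0) * (b 1 * y^1)) := by
    have h1 : a 0 * b 1 < a 1 * b 0 := (div_lt_div_iff₀ (hb 0) (hb 1)).1 (hmono Nat.zero_lt_one)
    simp only [pow_one, pow_zero, mul_one]
    nlinarith [mul_pos (sub_pos.2 h1) (sub_pos.2 hxy)]
  have hpos : 0 < ∑' p : ℕ × ℕ,
      (((a p.1 * y^p.1) * (b p.2 * x^p.2) - (a p.1 * x^p.1) * (b p.2 * y^p.2))
        + ((a p.2 * y^p.2) * (b p.1 * x^p.1) - (a p.2 * x^p.2) * (b p.1 * y^p.1))) :=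
    Summable.tsum_pos hg hgnonneg (1, 0) hg10
  rw [htg] at hpos
  have hfpos : 0 <
      (∑' n : ℕ, a n * y^n) * (∑' n : ℕ, b n * x^n)
        - (∑' n : ℕ, a n * x^n) * (∑' n : ℕ, b n * y^n) := by
    rw [← htf]; linarith
  simp only
  rw [div_lt_div_iff₀ hBx hBy]
  linarith
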